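/- Let S be a symmetric 2×2 positive definite matrix and L_{12} ≥ 0 a nonnegative scalar. Then the matrix K' with entries K'_{11} = (1 + √(1 + 4 S_{11} S_{22} L_{12}²))/(2 S_{11}), K'_{22} = (1 + √(1 + 4 S_{11} S_{22} L_{12}²))/(2 S_{22}), K'_{12} = K'_{21} = −L_{12} is positive definite and satisfies the stationarity conditions (K'^{-1})_{11} = S_{11} and (K'^{-1})_{22} = S_{22}. -/

import Mathlib

lemma posDef_fin_two {a b c : ℝ} (ha : 0 < a) (hdet : 0 < a * b - c ^ 2) :
    (!![a, c; c, b]).PosDef := by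
  refine Matrix.PosDef.of_dotProduct_mulVec_pos ?_ ?_
  · ext i j
    fin_cases i <;> fin_cases j <;> simp [Matrix.conjTranspose_apply]
  · intro x hx
    have hq : dotProduct (star x) (Matrix.mulVec !![a, c; c, b] x)
        = a * x 0 ^ 2 + 2 * c * x 0 * x 1 + b * x 1 ^ 2 := by
      simp [Matrix.mulVec, dotProduct, Fin.sum_univ_two]
      ring
    rw [hq]
    rcases eq_or_ne (x 1) 0 with h1 | h1
    · have h0 : x 0 ≠ 0 := by
        intro h0
        exact hx (funext fun i => by fin_cases i <;> simp [h0, h1])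
      rw [h1]; nlinarith [sq_pos_of_ne_zero h0, mul_pos ha (sq_pos_of_ne_zero h0)]
    · nlinarith [sq_pos_of_ne_zero h1, sq_nonneg (a * x 0 + c * x 1), mul_pos ha (sq_pos_of_ne_zero h1)]

theorem coordinate_descent_update (S : Matrix (Fin 2) (Fin 2) ℝ)
    (hS : S.PosDef) (L : ℝ) (hL : 0 ≤ L) :
    (!![(1 + Real.sqrt (1 + 4 * S 0 0 * S 1 1 * L ^ 2)) / (2 * S 0 0), -L;
        -L, (1 + Real.sqrt (1 + 4 * S 0 0 * S 1 1 * L ^ 2)) / (2 * S 1 1)]).PosDef ∧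
    (!![(1 + Real.sqrt (1 + 4 * S 0 0 * S 1 1 * L ^ 2)) / (2 * S 0 0), -L;
        -L, (1 + Real.sqrt (1 + 4 * S 0 0 * S 1 1 * L ^ 2)) / (2 * S 1 1)])⁻¹ 0 0
      = S 0 0 ∧
    (!![(1 + Real.sqrt (1 + 4 * S 0 0 * S 1 1 * L ^ 2)) / (2 * S 0 0), -L;
        -L, (1 + Real.sqrt (1 + 4 * S 0 0 * S 1 1 * L ^ 2)) / (2 * S 1 1)])⁻¹ 1 1
      = S 1 1 := by
  have ha : 0 < S 0 0 := by
    have h := hS.dotProduct_mulVec_pos (x := ![1, 0]) (by intro h; simpa using congrFun h 0)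
    simpa [dotProduct, Matrix.mulVec, Fin.sum_univ_two] using h
  have hb : 0 < S 1 1 := by
    have h := hS.dotProduct_mulVec_pos (x := ![0, 1]) (by intro h; simpa using congrFun h 1)
    simpa [dotProduct, Matrix.mulVec, Fin.sum_univ_two] using h
  set a := S 0 0 with ha'
  set b := S 1 1 with hb'
  set r := Real.sqrt (1 + 4 * a * b * L ^ 2) with hr'
  have hnn : (0:ℝ) ≤ 1 + 4 * a * b * L ^ 2 := by positivity
  have hr2 : r ^ 2 = 1 + 4 * a * b * L ^ 2 := Real.sq_sqrt hnn
  have hrn : 0 ≤ r := Real.sqrt_nonneg _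
  have hr1 : 1 ≤ r := by nlinarith [mul_pos ha hb, sq_nonneg L]
  have hrpos : 0 < 1 + r := by linarith
  set M := !![(1 + r) / (2 * a), -L; -L, (1 + r) / (2 * b)] with hM
  have hdet : M.det = (1 + r) / (2 * (a * b)) := by
    rw [hM, Matrix.det_fin_two_of]
    field_simp
    linear_combination hr2
  have hdetpos : 0 < M.det := by rw [hdet]; positivity
  have hpd : M.PosDef := by
    apply posDef_fin_two
    · positivity
    · have h := hdetpos
      rw [hM, Matrix.det_fin_two_of] at h
      nlinarith [h]
  have hinv : M⁻¹ = M.det⁻¹ • M.adjugate := by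
    rw [Matrix.inv_def, Ring.inverse_eq_inv']
  refine ⟨hpd, ?_, ?_⟩
  · rw [hinv, hdet, hM, Matrix.adjugate_fin_two]
    simp only [Matrix.smul_apply, Matrix.of_apply, Matrix.cons_val', Matrix.cons_val_zero,
      Matrix.empty_val', Matrix.cons_val_fin_one, smul_eq_mul, Matrix.cons_val_one, Matrix.head_cons]
    field_simp
  · rw [hinv, hdet, hM, Matrix.adjugate_fin_two]
    simp only [Matrix.smul_apply, Matrix.of_apply, Matrix.cons_val', Matrix.cons_val_one,
      Matrix.head_cons, Matrix.empty_val', Matrix.cons_val_fin_one, Matrix.head_fin_const,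
      smul_eq_mul, Matrix.cons_val_zero]
    field_simp
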